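/- Let h : ℝⁿ → ℝ² be a real analytic germ at the origin and r ≥ 2 a natural number. Define H : ℝⁿ × ℂ → ℝ² (identifying ℝ² with ℂ) by H(x, z) = h(x) + zʳ. Then H has an isolated singularity at the origin (i.e., the derivative of H has rank 2 at every point of a punctured neighborhood of 0) if and only if h has an isolated singularity at the origin. -/

import Mathlib

/-- A C¹ map germ has an isolated singularity at the origin: it vanishes at `0`
and its total derivative is surjective (rank 2 onto `ℝ² ≅ ℂ`) at every point of a
punctured neighbourhood of `0`. -/
def HasIsolatedSingularity {E : Type*} [NormedAddCommGroup E] [NormedSpace ℝ E]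
    (g : E → ℂ) : Prop :=
  g 0 = 0 ∧ ∃ U ∈ nhds (0 : E), ∀ x ∈ U, x ≠ 0 → Function.Surjective (fderiv ℝ g x)

lemma key_fderiv {n : ℕ} (h : (Fin n → ℝ) → ℂ) (hh : ContDiff ℝ 1 h) (r : ℕ)
    (x : Fin n → ℝ) (z : ℂ) (u : Fin n → ℝ) (w : ℂ) :
    fderiv ℝ (fun p : (Fin n → ℝ) × ℂ => h p.1 + p.2 ^ r) (x, z) (u, w) =
      fderiv ℝ h x u + (r : ℂ) * z ^ (r - 1) * w := by
  have h1 : HasFDerivAt (fun p : (Fin n → ℝ) × ℂ => h p.1)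
      ((fderiv ℝ h x).comp (ContinuousLinearMap.fst ℝ (Fin n → ℝ) ℂ)) (x, z) :=
    ((hh.differentiable one_ne_zero x).hasFDerivAt).comp (x, z) hasFDerivAt_fst
  have h2 : HasFDerivAt (fun p : (Fin n → ℝ) × ℂ => p.2 ^ r)
      ((((1 : ℂ →L[ℂ] ℂ).smulRight ((r : ℂ) * z ^ (r - 1))).restrictScalars ℝ).comp
        (ContinuousLinearMap.snd ℝ (Fin n → ℝ) ℂ)) (x, z) :=
    (((hasDerivAt_pow r z).hasFDerivAt).restrictScalars ℝ).comp (x, z) hasFDerivAt_snd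
  rw [(show HasFDerivAt (fun p : (Fin n → ℝ) × ℂ => h p.1 + p.2 ^ r) _ (x, z) from h1.add h2).fderiv]
  simp [mul_comm]

theorem suspension_isolated_singularity_iff {n : ℕ} (h : (Fin n → ℝ) → ℂ)
    (hh : ContDiff ℝ 1 h) (r : ℕ) (hr : 2 ≤ r) :
    HasIsolatedSingularity (fun p : (Fin n → ℝ) × ℂ => h p.1 + p.2 ^ r) ↔
      HasIsolatedSingularity h := by
  have hr0 : r ≠ 0 := by omega
  have hr1 : r - 1 ≠ 0 := by omega
  constructor
  · rintro ⟨hz, U, hU, hsurj⟩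
    refine ⟨by simpa [zero_pow hr0] using hz, ?_⟩
    have hcont : Continuous (fun x : Fin n → ℝ => (x, (0 : ℂ))) := by continuity
    refine ⟨(fun x : Fin n → ℝ => (x, (0 : ℂ))) ⁻¹' U, ?_, ?_⟩
    · have := hcont.continuousAt (x := (0 : Fin n → ℝ))
      exact this.preimage_mem_nhds (by exact hU)
    · intro x hx hx0 y
      obtain ⟨⟨u, w⟩, huw⟩ := hsurj (x, 0) hx (by simp [hx0]) y
      refine ⟨u, ?_⟩
      rw [key_fderiv h hh r x 0 u w, zero_pow hr1] at huw
      simpa using huw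
  · rintro ⟨hz, V, hV, hsurj⟩
    refine ⟨by simp [hz, zero_pow hr0], V ×ˢ Set.univ, ?_, ?_⟩
    · rw [nhds_prod_eq]; exact Filter.prod_mem_prod hV Filter.univ_mem
    · rintro ⟨x, z⟩ hxz hne y
      rcases eq_or_ne z 0 with rfl | hz0
      · have hx0 : x ≠ 0 := by
          intro hx; exact hne (by simp [hx, Prod.ext_iff])
        obtain ⟨u, hu⟩ := hsurj x hxz.1 hx0 y
        exact ⟨(u, 0), by rw [key_fderiv h hh r x 0 u 0]; simp [hu]⟩
      · have hc : (r : ℂ) * z ^ (r - 1) ≠ 0 := by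
          apply mul_ne_zero
          · exact_mod_cast Nat.cast_ne_zero.2 hr0
          · exact pow_ne_zero _ hz0
        refine ⟨(0, y / ((r : ℂ) * z ^ (r - 1))), ?_⟩
        rw [key_fderiv h hh r x z 0 (y / ((r : ℂ) * z ^ (r - 1)))]
        simp [mul_div_cancel₀ _ hc]
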